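/- arXiv:math/0604383 — 5 statements merged into one kernel-verified Lean document; each statement's English description precedes it below -/
import Mathlib

section
/- The function f₁ : ℝ² → ℝ defined piecewise by f₁(z₁, z₂) = z₂⁵ · sin z₂ for z₂ ≤ 0, f₁(z₁, z₂) = 0 for 0 < z₂ ≤ ψ(z₁), and f₁(z₁, z₂) = (z₂ − ψ(z₁))⁵ · sin(z₂ − ψ(z₁)) for z₂ > ψ(z₁), is continuous at every point where ψ is continuous and positive, and for each fixed z₁ the map z₂ ↦ f₁(z₁, z₂) is surjective onto ℝ. -/
noncomputable def f₁ (ψ : ℝ → ℝ) (z₁ z₂ : ℝ) : ℝ :=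
  if z₂ ≤ 0 then z₂ ^ 5 * Real.sin z₂
  else if z₂ ≤ ψ z₁ then 0
  else (z₂ - ψ z₁) ^ 5 * Real.sin (z₂ - ψ z₁)

noncomputable def gAux (t : ℝ) : ℝ := if t ≤ 0 then t ^ 5 * Real.sin t else 0
noncomputable def hAux (t : ℝ) : ℝ := if t ≤ 0 then 0 else t ^ 5 * Real.sin t

lemma gAux_cont : Continuous gAux := by
  apply Continuous.if_le (by continuity) continuous_const continuous_id continuous_const
  intro t ht; simp only [id] at ht; rw [ht]; simp

lemma hAux_cont : Continuous hAux := by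
  apply Continuous.if_le continuous_const (by continuity) continuous_id continuous_const
  intro t ht; simp only [id] at ht; rw [ht]; simp

lemma f₁_eq (ψ : ℝ → ℝ) (hψpos : ∀ z₁, 0 < ψ z₁) (z₁ z₂ : ℝ) :
    f₁ ψ z₁ z₂ = gAux z₂ + hAux (z₂ - ψ z₁) := by
  have h1 := hψpos z₁
  unfold f₁ gAux hAux
  rcases le_or_gt z₂ 0 with h | h
  · rw [if_pos h, if_pos h, if_pos (by linarith)]; ring
  · rw [if_neg (not_le.mpr h)]
    rcases le_or_gt z₂ (ψ z₁) with h2 | h2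
    · rw [if_pos h2, if_neg (not_le.mpr h), if_pos (by linarith)]; ring
    · rw [if_neg (not_le.mpr h2), if_neg (not_le.mpr h), if_neg (by push_neg; linarith)]
      ring

lemma key_surj (y : ℝ) : ∃ t ≤ (0:ℝ), t ^ 5 * Real.sin t = y := by
  obtain ⟨n, hn⟩ := exists_nat_ge |y|
  have hπ := Real.pi_gt_three
  set A : ℝ := 3 * Real.pi / 2 + 2 * Real.pi * n with hA
  set B : ℝ := Real.pi / 2 + 2 * Real.pi * n with hB
  have hn0 : (0:ℝ) ≤ n := Nat.cast_nonneg n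
  have hBpos : (1:ℝ) ≤ B := by rw [hB]; nlinarith
  have hApos : (1:ℝ) ≤ A := by rw [hA]; nlinarith
  have hsinB : Real.sin B = 1 := by
    rw [hB, show Real.pi / 2 + 2 * Real.pi * n = Real.pi / 2 + n * (2 * Real.pi) by ring,
      Real.sin_add_nat_mul_two_pi, Real.sin_pi_div_two]
  have hsinA : Real.sin A = -1 := by
    rw [hA, show 3 * Real.pi / 2 + 2 * Real.pi * n = Real.pi + Real.pi / 2 + n * (2 * Real.pi) by ring,
      Real.sin_add_nat_mul_two_pi]
    rw [show Real.pi + Real.pi / 2 = Real.pi / 2 + Real.pi by ring, Real.sin_add_pi,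
      Real.sin_pi_div_two]
  set F : ℝ → ℝ := fun t => t ^ 5 * Real.sin t with hF
  have hFA : F (-A) = -(A ^ 5) := by
    simp only [hF, Real.sin_neg, hsinA]
    ring
  have hFB : F (-B) = B ^ 5 := by
    simp only [hF, Real.sin_neg, hsinB]
    ring
  have hAB : -A ≤ -B := by rw [neg_le_neg_iff, hA, hB]; nlinarith
  have hBy : y ≤ F (-B) := by
    rw [hFB]
    have h1 : B ≥ (n:ℝ) := by rw [hB]; nlinarith
    have : B ^ 5 ≥ B := le_self_pow₀ hBpos (by norm_num)
    calc y ≤ |y| := le_abs_self y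
      _ ≤ n := hn
      _ ≤ B := h1
      _ ≤ B ^ 5 := this
  have hAy : F (-A) ≤ y := by
    rw [hFA]
    have h1 : A ≥ (n:ℝ) := by rw [hA]; nlinarith
    have : A ^ 5 ≥ A := le_self_pow₀ hApos (by norm_num)
    have := neg_abs_le y
    calc -(A^5) ≤ -A := by linarith
      _ ≤ -(n:ℝ) := by linarith
      _ ≤ -|y| := by linarith
      _ ≤ y := neg_abs_le y
  have hcont : ContinuousOn F (Set.Icc (-A) (-B)) := by
    apply Continuous.continuousOn; continuity
  have := intermediate_value_Icc hAB hcont ⟨hAy, hBy⟩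
  obtain ⟨t, ht, hFt⟩ := this
  exact ⟨t, le_trans ht.2 (by rw [hB] at hBpos ⊢; nlinarith), hFt⟩

theorem f₁_continuous_and_surjective (ψ : ℝ → ℝ)
    (hψpos : ∀ z₁, 0 < ψ z₁) (hψcont : Continuous ψ) :
    Continuous (fun p : ℝ × ℝ => f₁ ψ p.1 p.2) ∧
      ∀ z₁, Function.Surjective (f₁ ψ z₁) := by
  constructor
  · have : (fun p : ℝ × ℝ => f₁ ψ p.1 p.2)
        = fun p : ℝ × ℝ => gAux p.2 + hAux (p.2 - ψ p.1) := by
      funext p; exact f₁_eq ψ hψpos p.1 p.2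
    rw [this]
    exact (gAux_cont.comp continuous_snd).add
      (hAux_cont.comp (continuous_snd.sub (hψcont.comp continuous_fst)))
  · intro z₁ y
    obtain ⟨t, ht, hFt⟩ := key_surj y
    exact ⟨t, by rw [f₁]; rw [if_pos ht]; exact hFt⟩
end

section
/- Let Ξ be the collection of subsets of ℝ × ℝⁿ of the form Σ_{Θ,ϑ,A_Θ,A_ϑ} = { (s, z) : ϑ(z) ≤ s ≤ Θ(z) } \ ({ (s,z) : s = ϑ(z), z ∈ A_ϑ } ∪ { (s,z) : s = Θ(z), z ∈ A_Θ }), where Θ, ϑ range over all L-Lipschitz continuous functions ℝⁿ → I (I a fixed compact interval) and A_Θ, A_ϑ range over all subsets of ℝⁿ. Then Ξ is closed under finite intersections: if Σ′, Σ″ ∈ Ξ then Σ′ ∩ Σ″ ∈ Ξ. -/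
def Xi (n : ℕ) (L t₀ T : ℝ) : Set (Set (ℝ × EuclideanSpace ℝ (Fin n))) :=
  { S | ∃ (Θ ϑ : EuclideanSpace ℝ (Fin n) → ℝ)
          (AΘ Aϑ : Set (EuclideanSpace ℝ (Fin n))),
      (∀ z, Θ z ∈ Set.Icc t₀ T) ∧ (∀ z, ϑ z ∈ Set.Icc t₀ T) ∧
      (∀ y z, |Θ y - Θ z| ≤ L * ‖y - z‖) ∧ (∀ y z, |ϑ y - ϑ z| ≤ L * ‖y - z‖) ∧
      S = { p : ℝ × EuclideanSpace ℝ (Fin n) | ϑ p.2 ≤ p.1 ∧ p.1 ≤ Θ p.2 } \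
          ({ p : ℝ × EuclideanSpace ℝ (Fin n) | p.1 = ϑ p.2 ∧ p.2 ∈ Aϑ } ∪
           { p : ℝ × EuclideanSpace ℝ (Fin n) | p.1 = Θ p.2 ∧ p.2 ∈ AΘ }) }

theorem Xi_inter_mem (n : ℕ) (hn : 0 < n) (L t₀ T : ℝ) (hL : 0 < L) (hI : t₀ < T) :
    ∀ S1 ∈ Xi n L t₀ T, ∀ S2 ∈ Xi n L t₀ T, S1 ∩ S2 ∈ Xi n L t₀ T := by
  rintro S1 ⟨Θ1, ϑ1, A1, B1, hΘ1I, hϑ1I, hΘ1L, hϑ1L, rfl⟩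
  rintro S2 ⟨Θ2, ϑ2, A2, B2, hΘ2I, hϑ2I, hΘ2L, hϑ2L, rfl⟩
  refine ⟨fun z => min (Θ1 z) (Θ2 z), fun z => max (ϑ1 z) (ϑ2 z),
    {z | min (Θ1 z) (Θ2 z) = Θ1 z ∧ z ∈ A1} ∪ {z | min (Θ1 z) (Θ2 z) = Θ2 z ∧ z ∈ A2},
    {z | max (ϑ1 z) (ϑ2 z) = ϑ1 z ∧ z ∈ B1} ∪ {z | max (ϑ1 z) (ϑ2 z) = ϑ2 z ∧ z ∈ B2},
    fun z => ⟨le_min (hΘ1I z).1 (hΘ2I z).1, min_le_of_left_le (hΘ1I z).2⟩,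
    fun z => ⟨le_max_of_le_left (hϑ1I z).1, max_le (hϑ1I z).2 (hϑ2I z).2⟩,
    fun y z => (abs_min_sub_min_le_max _ _ _ _).trans (max_le (hΘ1L y z) (hΘ2L y z)),
    fun y z => (abs_max_sub_max_le_max _ _ _ _).trans (max_le (hϑ1L y z) (hϑ2L y z)), ?_⟩
  ext ⟨s, z⟩
  simp only [Set.mem_inter_iff, Set.mem_diff, Set.mem_union, Set.mem_setOf_eq]
  constructor
  · rintro ⟨⟨⟨h1, h2⟩, h3⟩, ⟨h4, h5⟩, h6⟩
    push_neg at h3 h6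
    refine ⟨⟨max_le h1 h4, le_min h2 h5⟩, ?_⟩
    push_neg
    exact ⟨fun hs => ⟨fun he hz => h3.1 (hs.trans he) hz, fun he hz => h6.1 (hs.trans he) hz⟩,
      fun hs => ⟨fun he hz => h3.2 (hs.trans he) hz, fun he hz => h6.2 (hs.trans he) hz⟩⟩
  · rintro ⟨⟨h1, h2⟩, h3⟩
    push_neg at h3
    have hϑ1 := le_trans (le_max_left (ϑ1 z) (ϑ2 z)) h1
    have hϑ2 := le_trans (le_max_right (ϑ1 z) (ϑ2 z)) h1
    have hΘ1 := le_trans h2 (min_le_left (Θ1 z) (Θ2 z))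
    have hΘ2 := le_trans h2 (min_le_right (Θ1 z) (Θ2 z))
    refine ⟨⟨⟨hϑ1, hΘ1⟩, ?_⟩, ⟨hϑ2, hΘ2⟩, ?_⟩ <;> push_neg
    · refine ⟨fun hs hz => ?_, fun hs hz => ?_⟩
      · have hs' : s = max (ϑ1 z) (ϑ2 z) := le_antisymm (hs.le.trans (le_max_left _ _)) h1
        exact (h3.1 hs').1 (hs'.symm.trans hs) hz
      · have hs' : s = min (Θ1 z) (Θ2 z) := le_antisymm h2 ((min_le_left _ _).trans hs.ge)
        exact (h3.2 hs').1 (hs'.symm.trans hs) hz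
    · refine ⟨fun hs hz => ?_, fun hs hz => ?_⟩
      · have hs' : s = max (ϑ1 z) (ϑ2 z) := le_antisymm (hs.le.trans (le_max_right _ _)) h1
        exact (h3.1 hs').2 (hs'.symm.trans hs) hz
      · have hs' : s = min (Θ1 z) (Θ2 z) := le_antisymm h2 ((min_le_right _ _).trans hs.ge)
        exact (h3.2 hs').2 (hs'.symm.trans hs) hz
end

section
/- Let Ξ be the collection of sets Σ_{Θ,ϑ,A_Θ,A_ϑ} ⊂ ℝ × ℝⁿ as above (graph-bounded sets with L-Lipschitz upper and lower boundary functions and arbitrary sets of excluded boundary points). Then Ξ is a semiring of sets: (a) ∅ ∈ Ξ; (b) Ξ is closed under pairwise intersection; (c) for all Σ, Σ₁ ∈ Ξ with Σ₁ ⊂ Σ, there exist finitely many pairwise disjoint sets Σ₂, ..., Σ_{q₀} ∈ Ξ with Σ = Σ₁ ∪ Σ₂ ∪ ... ∪ Σ_{q₀}. -/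
def XiCol (n : ℕ) (L t₀ T : ℝ) : Set (Set (ℝ × EuclideanSpace ℝ (Fin n))) :=
  { S | ∃ (Θ ϑ : EuclideanSpace ℝ (Fin n) → ℝ)
          (AΘ Aϑ : Set (EuclideanSpace ℝ (Fin n))),
      (∀ z, Θ z ∈ Set.Icc t₀ T) ∧ (∀ z, ϑ z ∈ Set.Icc t₀ T) ∧
      (∀ y z, |Θ y - Θ z| ≤ L * ‖y - z‖) ∧ (∀ y z, |ϑ y - ϑ z| ≤ L * ‖y - z‖) ∧
      S = { p : ℝ × EuclideanSpace ℝ (Fin n) | ϑ p.2 ≤ p.1 ∧ p.1 ≤ Θ p.2 } \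
          ({ p : ℝ × EuclideanSpace ℝ (Fin n) | p.1 = ϑ p.2 ∧ p.2 ∈ Aϑ } ∪
           { p : ℝ × EuclideanSpace ℝ (Fin n) | p.1 = Θ p.2 ∧ p.2 ∈ AΘ }) }

lemma mem_XiCol_of {n : ℕ} {L t₀ T : ℝ}
    (S : Set (ℝ × EuclideanSpace ℝ (Fin n)))
    (Θ ϑ : EuclideanSpace ℝ (Fin n) → ℝ)
    (hΘI : ∀ z, Θ z ∈ Set.Icc t₀ T) (hϑI : ∀ z, ϑ z ∈ Set.Icc t₀ T)
    (hΘL : ∀ y z, |Θ y - Θ z| ≤ L * ‖y - z‖) (hϑL : ∀ y z, |ϑ y - ϑ z| ≤ L * ‖y - z‖)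
    (H1 : ∀ p ∈ S, ϑ p.2 ≤ p.1 ∧ p.1 ≤ Θ p.2)
    (H2 : ∀ p : ℝ × EuclideanSpace ℝ (Fin n), ϑ p.2 < p.1 → p.1 < Θ p.2 → p ∈ S) :
    S ∈ XiCol n L t₀ T := by
  refine ⟨Θ, ϑ, {z | (Θ z, z) ∉ S}, {z | (ϑ z, z) ∉ S}, hΘI, hϑI, hΘL, hϑL, ?_⟩
  ext ⟨s, z⟩
  constructor
  · intro hp
    refine ⟨H1 _ hp, ?_⟩
    rintro (⟨he, hz⟩ | ⟨he, hz⟩)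
    · exact hz (he ▸ hp)
    · exact hz (he ▸ hp)
  · rintro ⟨⟨h1, h2⟩, hne⟩
    by_cases hϑ : s = ϑ z
    · by_contra hns
      exact hne (Or.inl ⟨hϑ, show (ϑ z, z) ∉ S by rwa [← hϑ]⟩)
    · by_cases hΘ' : s = Θ z
      · by_contra hns
        exact hne (Or.inr ⟨hΘ', show (Θ z, z) ∉ S by rwa [← hΘ']⟩)
      · exact H2 (s, z) (lt_of_le_of_ne h1 (fun h => hϑ h.symm)) (lt_of_le_of_ne h2 hΘ')

lemma slab_of_rep {n : ℕ} {S : Set (ℝ × EuclideanSpace ℝ (Fin n))}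
    {Θ ϑ : EuclideanSpace ℝ (Fin n) → ℝ} {AΘ Aϑ : Set (EuclideanSpace ℝ (Fin n))}
    (hS : S = { p : ℝ × EuclideanSpace ℝ (Fin n) | ϑ p.2 ≤ p.1 ∧ p.1 ≤ Θ p.2 } \
          ({ p : ℝ × EuclideanSpace ℝ (Fin n) | p.1 = ϑ p.2 ∧ p.2 ∈ Aϑ } ∪
           { p : ℝ × EuclideanSpace ℝ (Fin n) | p.1 = Θ p.2 ∧ p.2 ∈ AΘ })) :
    ∀ p ∈ S, ϑ p.2 ≤ p.1 ∧ p.1 ≤ Θ p.2 := by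
  subst hS; exact fun p hp => hp.1

lemma interior_of_rep {n : ℕ} {S : Set (ℝ × EuclideanSpace ℝ (Fin n))}
    {Θ ϑ : EuclideanSpace ℝ (Fin n) → ℝ} {AΘ Aϑ : Set (EuclideanSpace ℝ (Fin n))}
    (hS : S = { p : ℝ × EuclideanSpace ℝ (Fin n) | ϑ p.2 ≤ p.1 ∧ p.1 ≤ Θ p.2 } \
          ({ p : ℝ × EuclideanSpace ℝ (Fin n) | p.1 = ϑ p.2 ∧ p.2 ∈ Aϑ } ∪
           { p : ℝ × EuclideanSpace ℝ (Fin n) | p.1 = Θ p.2 ∧ p.2 ∈ AΘ })) :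
    ∀ p : ℝ × EuclideanSpace ℝ (Fin n), ϑ p.2 < p.1 → p.1 < Θ p.2 → p ∈ S := by
  subst hS
  intro p h1 h2
  refine ⟨⟨h1.le, h2.le⟩, ?_⟩
  rintro (⟨he, _⟩ | ⟨he, _⟩)
  · exact absurd he h1.ne'
  · exact absurd he h2.ne

lemma lipMax {n : ℕ} {L : ℝ} {f g : EuclideanSpace ℝ (Fin n) → ℝ}
    (hf : ∀ y z, |f y - f z| ≤ L * ‖y - z‖) (hg : ∀ y z, |g y - g z| ≤ L * ‖y - z‖) :
    ∀ y z, |max (f y) (g y) - max (f z) (g z)| ≤ L * ‖y - z‖ := fun y z =>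
  (abs_max_sub_max_le_max _ _ _ _).trans (max_le (hf y z) (hg y z))

lemma lipMin {n : ℕ} {L : ℝ} {f g : EuclideanSpace ℝ (Fin n) → ℝ}
    (hf : ∀ y z, |f y - f z| ≤ L * ‖y - z‖) (hg : ∀ y z, |g y - g z| ≤ L * ‖y - z‖) :
    ∀ y z, |min (f y) (g y) - min (f z) (g z)| ≤ L * ‖y - z‖ := fun y z =>
  (abs_min_sub_min_le_max _ _ _ _).trans (max_le (hf y z) (hg y z))

lemma IccMax {t₀ T a b : ℝ} (ha : a ∈ Set.Icc t₀ T) (hb : b ∈ Set.Icc t₀ T) :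
    max a b ∈ Set.Icc t₀ T := ⟨le_max_of_le_left ha.1, max_le ha.2 hb.2⟩

lemma IccMin {t₀ T a b : ℝ} (ha : a ∈ Set.Icc t₀ T) (hb : b ∈ Set.Icc t₀ T) :
    min a b ∈ Set.Icc t₀ T := ⟨le_min ha.1 hb.1, min_le_of_left_le ha.2⟩

theorem XiCol_isSemiring (n : ℕ) (hn : 0 < n) (L t₀ T : ℝ) (hL : 0 < L) (hI : t₀ < T) :
    (∅ ∈ XiCol n L t₀ T) ∧
    (∀ S1 ∈ XiCol n L t₀ T, ∀ S2 ∈ XiCol n L t₀ T, S1 ∩ S2 ∈ XiCol n L t₀ T) ∧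
    (∀ S ∈ XiCol n L t₀ T, ∀ S1 ∈ XiCol n L t₀ T, S1 ⊆ S →
      ∃ (q : ℕ) (f : Fin q → Set (ℝ × EuclideanSpace ℝ (Fin n))),
        (∀ i, f i ∈ XiCol n L t₀ T) ∧
        (∀ i, Disjoint S1 (f i)) ∧
        (Pairwise (Function.onFun Disjoint f)) ∧
        S = S1 ∪ ⋃ i, f i) := by
  have lipconst : ∀ c : ℝ, ∀ y z : EuclideanSpace ℝ (Fin n), |c - c| ≤ L * ‖y - z‖ := by
    intro c y z; simp; positivity
  refine ⟨?_, ?_, ?_⟩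
  · -- empty set
    refine mem_XiCol_of ∅ (fun _ => t₀) (fun _ => T) (fun _ => ⟨le_refl _, hI.le⟩)
      (fun _ => ⟨hI.le, le_refl _⟩) (lipconst t₀) (lipconst T)
      (fun p hp => absurd hp (Set.notMem_empty _)) ?_
    intro p h1 h2
    exact absurd (h1.trans h2) (not_lt.mpr hI.le)
  · -- intersection
    rintro S1 ⟨Θ1, ϑ1, AΘ1, Aϑ1, hΘ1I, hϑ1I, hΘ1L, hϑ1L, hS1⟩
      S2 ⟨Θ2, ϑ2, AΘ2, Aϑ2, hΘ2I, hϑ2I, hΘ2L, hϑ2L, hS2⟩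
    refine mem_XiCol_of _ (fun z => min (Θ1 z) (Θ2 z)) (fun z => max (ϑ1 z) (ϑ2 z))
      (fun z => IccMin (hΘ1I z) (hΘ2I z)) (fun z => IccMax (hϑ1I z) (hϑ2I z))
      (lipMin hΘ1L hΘ2L) (lipMax hϑ1L hϑ2L) ?_ ?_
    · rintro p ⟨hp1, hp2⟩
      obtain ⟨a1, b1⟩ := slab_of_rep hS1 p hp1
      obtain ⟨a2, b2⟩ := slab_of_rep hS2 p hp2
      exact ⟨max_le a1 a2, le_min b1 b2⟩
    · intro p h1 h2
      rw [max_lt_iff] at h1; rw [lt_min_iff] at h2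
      exact ⟨interior_of_rep hS1 p h1.1 h2.1, interior_of_rep hS2 p h1.2 h2.2⟩
  · -- difference
    rintro S ⟨Θ, ϑ, AΘ, Aϑ, hΘI, hϑI, hΘL, hϑL, hS⟩
      S1 ⟨Θ1, ϑ1, AΘ1, Aϑ1, hΘ1I, hϑ1I, hΘ1L, hϑ1L, hS1⟩ hsub
    set c : EuclideanSpace ℝ (Fin n) → ℝ := fun z => max (ϑ z) (min (Θ z) (ϑ1 z)) with hc
    set d : EuclideanSpace ℝ (Fin n) → ℝ := fun z => max (ϑ z) (min (Θ z) (Θ1 z)) with hd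
    set e : EuclideanSpace ℝ (Fin n) → ℝ := fun z => max (c z) (d z) with he
    set P1 : Set (ℝ × EuclideanSpace ℝ (Fin n)) :=
      {p | p ∈ S ∧ p ∉ S1 ∧ p.1 ≤ c p.2} with hP1
    set P2 : Set (ℝ × EuclideanSpace ℝ (Fin n)) :=
      {p | p ∈ S ∧ p ∉ S1 ∧ c p.2 < p.1} with hP2
    have hcI : ∀ z, c z ∈ Set.Icc t₀ T := fun z => IccMax (hϑI z) (IccMin (hΘI z) (hϑ1I z))
    have hdI : ∀ z, d z ∈ Set.Icc t₀ T := fun z => IccMax (hϑI z) (IccMin (hΘI z) (hΘ1I z))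
    have heI : ∀ z, e z ∈ Set.Icc t₀ T := fun z => IccMax (hcI z) (hdI z)
    have hcL : ∀ y z, |c y - c z| ≤ L * ‖y - z‖ := lipMax hϑL (lipMin hΘL hϑ1L)
    have hdL : ∀ y z, |d y - d z| ≤ L * ‖y - z‖ := lipMax hϑL (lipMin hΘL hΘ1L)
    have heL : ∀ y z, |e y - e z| ≤ L * ‖y - z‖ := lipMax hcL hdL
    -- P1 ∈ XiCol
    have hP1mem : P1 ∈ XiCol n L t₀ T := by
      refine mem_XiCol_of P1 c ϑ hcI hϑI hcL hϑL ?_ ?_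
      · rintro p ⟨hpS, _, hpc⟩
        exact ⟨(slab_of_rep hS p hpS).1, hpc⟩
      · rintro ⟨s, z⟩ h1 h2
        have hsc : s < Θ z ∧ s < ϑ1 z := by
          rcases lt_max_iff.mp h2 with h | h
          · exact absurd h (not_lt.mpr h1.le)
          · exact lt_min_iff.mp h
        refine ⟨interior_of_rep hS _ h1 hsc.1, ?_, h2.le⟩
        intro hp
        exact absurd (slab_of_rep hS1 _ hp).1 (not_le.mpr hsc.2)
    -- P2 ∈ XiCol
    have hP2mem : P2 ∈ XiCol n L t₀ T := by
      refine mem_XiCol_of P2 Θ e hΘI heI hΘL heL ?_ ?_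
      · rintro ⟨s, z⟩ ⟨hpS, hpnS1, hpc⟩
        obtain ⟨hϑs, hsΘ⟩ := slab_of_rep hS _ hpS
        refine ⟨max_le hpc.le ?_, hsΘ⟩
        by_contra hds
        push_neg at hds
        -- s < d z, s > c z ⇒ ϑ1 z < s < Θ1 z ⇒ (s,z) ∈ S1, contradiction
        have hϑlt : ϑ z < s := lt_of_le_of_lt (le_max_left _ _) hpc
        have hsΘ1 : s < Θ1 z := by
          rcases lt_max_iff.mp hds with h | h
          · exact absurd h (not_lt.mpr hϑlt.le)
          · exact (lt_min_iff.mp h).2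
        have hϑ1s : ϑ1 z < s := by
          have h' : min (Θ z) (ϑ1 z) < s := lt_of_le_of_lt (le_max_right _ _) hpc
          rcases min_lt_iff.mp h' with h | h
          · exact absurd h (not_lt.mpr hsΘ)
          · exact h
        exact hpnS1 (interior_of_rep hS1 _ hϑ1s hsΘ1)
      · rintro ⟨s, z⟩ h1 h2
        have hcs : c z < s := lt_of_le_of_lt (le_max_left _ _) h1
        have hϑs : ϑ z < s := lt_of_le_of_lt (le_max_left _ _) hcs
        refine ⟨interior_of_rep hS _ hϑs h2, ?_, hcs⟩
        intro hp
        have hds : d z < s := lt_of_le_of_lt (le_max_right _ _) h1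
        have : min (Θ z) (Θ1 z) < s := lt_of_le_of_lt (le_max_right _ _) hds
        rcases min_lt_iff.mp this with h | h
        · exact absurd h (not_lt.mpr h2.le)
        · exact absurd (slab_of_rep hS1 _ hp).2 (not_le.mpr h)
    refine ⟨2, ![P1, P2], ?_, ?_, ?_, ?_⟩
    · intro i
      fin_cases i
      · exact hP1mem
      · exact hP2mem
    · intro i
      fin_cases i <;> rw [Set.disjoint_right] <;> rintro p ⟨_, hp, _⟩ <;> exact hp
    · intro i j hij
      fin_cases i <;> fin_cases j <;> simp at hij ⊢ <;>
        [skip; skip] <;>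
        · rw [Function.onFun]
          rw [Set.disjoint_left]
          rintro ⟨s, z⟩ ⟨_, _, ha⟩ ⟨_, _, hb⟩
          simp only at ha hb
          first
            | exact absurd hb (not_lt.mpr ha)
            | exact absurd ha (not_lt.mpr hb)
    · ext p
      simp only [Set.mem_union, Set.mem_iUnion, Fin.exists_fin_two]
      constructor
      · intro hpS
        by_cases h1 : p ∈ S1
        · exact Or.inl h1
        · by_cases h2 : p.1 ≤ c p.2
          · exact Or.inr (Or.inl (by exact ⟨hpS, h1, h2⟩))
          · exact Or.inr (Or.inr (by exact ⟨hpS, h1, not_le.mp h2⟩))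
      · rintro (h | h | h)
        · exact hsub h
        · exact h.1
        · exact h.1
end

section
/- Let A ∈ ℝ^{p×p}(t) and b ∈ ℝ^p(t) give a time-varying linear control system χ̇(t) = A(t)χ(t) + b(t)u(t) on an interval [a, b] that is completely controllable. Then for each i = 1,...,p there exists a C¹ control wᵢ : [a, b] → ℝ with wᵢ(a) = ẇᵢ(a) = wᵢ(b) = ẇᵢ(b) = 0 steering the state 0 ∈ ℝ^p at time a to the i-th standard basis vector eᵢ ∈ ℝ^p at time b. -/
set_option maxHeartbeats 1000000

open Set Metric Matrix Asymptotics MeasureTheory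

lemma hasDerivWithinAt_singleton' {E : Type*} [NormedAddCommGroup E] [NormedSpace ℝ E]
    (f : ℝ → E) (x : ℝ) (d : E) : HasDerivWithinAt f d {x} x := by
  rw [hasDerivWithinAt_iff_hasFDerivWithinAt]
  simp only [HasFDerivWithinAt, nhdsWithin_singleton, hasFDerivAtFilter_iff_isLittleO,
    isLittleO_pure]
  simp

lemma chain_ode {E : Type*} [NormedAddCommGroup E] [NormedSpace ℝ E] [CompleteSpace E]
    (v : ℝ → E → E) (α β : ℝ) (hab : α ≤ β) (K C0 : ℝ) (hK : 0 ≤ K)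
    (hlip : ∀ t ∈ Icc α β, LipschitzWith K.toNNReal (v t))
    (hcont : ∀ x, ContinuousOn (fun t => v t x) (Icc α β))
    (hC0 : ∀ t ∈ Icc α β, ‖v t 0‖ ≤ C0) (x₀ : E) :
    ∃ f : ℝ → E, f α = x₀ ∧ ∀ t ∈ Icc α β, HasDerivWithinAt f (v t (f t)) (Icc α β) t := by
  have hC0' : 0 ≤ C0 := le_trans (norm_nonneg _) (hC0 α ⟨le_refl _, hab⟩)
  obtain ⟨n0, hn0⟩ := exists_nat_ge (2 * K * (β - α))
  set n : ℕ := max n0 1 with hn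
  have hn1 : 1 ≤ (n : ℝ) := by exact_mod_cast le_max_right n0 1
  have hnpos : (0:ℝ) < n := by linarith
  set h : ℝ := (β - α) / n with hh
  have hh0 : 0 ≤ h := div_nonneg (by linarith) hnpos.le
  have hKh : K * h ≤ 1 / 2 := by
    rw [hh, mul_div_assoc']
    rw [div_le_div_iff₀ hnpos (by norm_num)]
    have : 2 * K * (β - α) ≤ (n:ℝ) := le_trans hn0 (by exact_mod_cast le_max_left n0 1)
    linarith
  have claim : ∀ m : ℕ, ∀ s : ℝ, ∀ y : E, α ≤ s → s + m * h ≤ β →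
      ∃ f : ℝ → E, f s = y ∧
        ∀ t ∈ Icc s (s + m * h), HasDerivWithinAt f (v t (f t)) (Icc s (s + m * h)) t := by
    intro m
    induction m with
    | zero =>
      intro s y hs hsb
      refine ⟨fun _ => y, rfl, ?_⟩
      intro t htm
      simp only [Nat.cast_zero, zero_mul, add_zero, Icc_self, mem_singleton_iff] at htm ⊢
      subst htm
      exact hasDerivWithinAt_singleton' _ _ _
    | succ m ih =>
      intro s y hs hsb
      have hsub : s + h ≤ s + (m + 1 : ℕ) * h := by
        push_cast; nlinarith [mul_nonneg (Nat.cast_nonneg (α := ℝ) m) hh0]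
      have hsβ : s + h ≤ β := le_trans hsub hsb
      have hIsub : Icc s (s + h) ⊆ Icc α β := Icc_subset_Icc hs hsβ
      set R : ℝ := 2 * h * (K * ‖y‖ + C0) with hR
      have hR0 : 0 ≤ R := by positivity
      set C : ℝ := K * R + K * ‖y‖ + C0 with hC
      have hCnn : 0 ≤ C := by positivity
      have hpl : IsPicardLindelof v (tmin := s) (tmax := s + h) ⟨s, le_refl _, by linarith⟩ y
          R.toNNReal 0 C.toNNReal K.toNNReal :=
        { lipschitzOnWith := fun t ht => ((hlip t (hIsub ht)).lipschitzOnWith)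
          continuousOn := fun x _ => (hcont x).mono hIsub
          norm_le := fun t ht x hx => by
            rw [Real.coe_toNNReal C hCnn]
            rw [Real.coe_toNNReal R hR0] at hx
            have h1 : ‖v t x - v t 0‖ ≤ K * ‖x - 0‖ := by
              have := (hlip t (hIsub ht)).dist_le_mul x 0
              rwa [dist_eq_norm, dist_eq_norm, Real.coe_toNNReal K hK] at this
            have h2 : ‖x‖ ≤ ‖y‖ + R := by
              have := mem_closedBall_iff_norm.mp hx
              have : ‖x‖ - ‖y‖ ≤ R := le_trans (norm_sub_norm_le x y) this
              linarith
            calc ‖v t x‖ ≤ ‖v t x - v t 0‖ + ‖v t 0‖ := by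
                  simpa using norm_add_le (v t x - v t 0) (v t 0)
            _ ≤ K * ‖x‖ + C0 := by
                  rw [sub_zero] at h1
                  exact add_le_add h1 (hC0 t (hIsub ht))
            _ ≤ C := by rw [hC]; nlinarith
          mul_max_le := by
            rw [Real.coe_toNNReal C hCnn, Real.coe_toNNReal R hR0, NNReal.coe_zero, sub_zero]
            show C * max (s + h - s) (s - s) ≤ R
            rw [add_sub_cancel_left, sub_self, max_eq_left hh0, hC, hR]
            nlinarith }
      obtain ⟨g, (hg0 : g s = y), hg⟩ := hpl.exists_eq_forall_mem_Icc_hasDerivWithinAt₀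
      obtain ⟨f₂, hf₂0, hf₂⟩ := ih (s + h) (g (s + h)) (le_trans hs (by linarith))
        (by push_cast at hsb ⊢; linarith)
      set e : ℝ := s + (m + 1 : ℕ) * h with he
      have hee : s + h + m * h = e := by rw [he]; push_cast; ring
      rw [hee] at hf₂
      refine ⟨fun t => if t ≤ s + h then g t else f₂ t, by
        show (if s ≤ s + h then g s else f₂ s) = y
        rw [if_pos (by linarith : s ≤ s + h)]; exact hg0, ?_⟩
      intro t hte
      have hfg : EqOn (fun t => if t ≤ s + h then g t else f₂ t) g (Icc s (s + h)) := by
        intro t' ht'; simp [ht'.2]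
      have hff₂ : EqOn (fun t => if t ≤ s + h then g t else f₂ t) f₂ (Icc (s + h) e) := by
        intro t' ht'
        rcases eq_or_lt_of_le ht'.1 with hq | hq
        · simp [← hq, hg0, hf₂0]
        · simp [not_le.mpr hq]
      have d1 : HasDerivWithinAt (fun t => if t ≤ s + h then g t else f₂ t)
          (v t ((fun t => if t ≤ s + h then g t else f₂ t) t)) (Icc s (s + h)) t := by
        by_cases hc : t ≤ s + h
        · have htm : t ∈ Icc s (s + h) := ⟨hte.1, hc⟩
          exact ((hg t htm).congr hfg (hfg htm)).congr_deriv (by simp [hfg htm])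
        · rw [hasDerivWithinAt_iff_hasFDerivWithinAt]
          exact HasFDerivWithinAt.of_notMem_closure (by
            rw [isClosed_Icc.closure_eq]; exact fun hm => hc hm.2)
      have d2 : HasDerivWithinAt (fun t => if t ≤ s + h then g t else f₂ t)
          (v t ((fun t => if t ≤ s + h then g t else f₂ t) t)) (Icc (s + h) e) t := by
        by_cases hc : s + h ≤ t
        · have htm : t ∈ Icc (s + h) e := ⟨hc, hte.2⟩
          exact ((hf₂ t htm).congr hff₂ (hff₂ htm)).congr_deriv (by simp [hff₂ htm])
        · rw [hasDerivWithinAt_iff_hasFDerivWithinAt]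
          exact HasFDerivWithinAt.of_notMem_closure (by
            rw [isClosed_Icc.closure_eq]; exact fun hm => hc hm.1)
      have := d1.union d2
      rwa [Icc_union_Icc_eq_Icc (by linarith : s ≤ s + h) hsub] at this
  have hfin : α + n * h = β := by
    rw [hh]; field_simp; ring
  obtain ⟨f, hf0, hf⟩ := claim n α x₀ le_rfl (le_of_eq hfin)
  rw [hfin] at hf
  exact ⟨f, hf0, hf⟩

lemma chain_ode_two {E : Type*} [NormedAddCommGroup E] [NormedSpace ℝ E] [CompleteSpace E]
    (v : ℝ → E → E) (α β t₀ : ℝ) (ht₀ : t₀ ∈ Icc α β) (K C0 : ℝ) (hK : 0 ≤ K)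
    (hlip : ∀ t ∈ Icc α β, LipschitzWith K.toNNReal (v t))
    (hcont : ∀ x, ContinuousOn (fun t => v t x) (Icc α β))
    (hC0 : ∀ t ∈ Icc α β, ‖v t 0‖ ≤ C0) (x₀ : E) :
    ∃ f : ℝ → E, f t₀ = x₀ ∧ ∀ t ∈ Icc α β, HasDerivWithinAt f (v t (f t)) (Icc α β) t := by
  obtain ⟨hα, hβ⟩ := ht₀
  -- forward part on [t₀, β]
  obtain ⟨f, hf0, hf⟩ := chain_ode v t₀ β hβ K C0 hK
    (fun t htm => hlip t ⟨le_trans hα htm.1, htm.2⟩)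
    (fun x => (hcont x).mono (Icc_subset_Icc hα le_rfl))
    (fun t htm => hC0 t ⟨le_trans hα htm.1, htm.2⟩) x₀
  -- backward part on [α, t₀] via time reversal
  set ρ : ℝ → ℝ := fun s => α + t₀ - s with hρ
  have hρmem : ∀ s ∈ Icc α t₀, ρ s ∈ Icc α t₀ := by
    intro s hsm
    exact ⟨by simp only [hρ]; linarith [hsm.2], by simp only [hρ]; linarith [hsm.1]⟩
  obtain ⟨g', hg'0, hg'⟩ := chain_ode (fun s x => -v (ρ s) x) α t₀ hα K C0 hK
    (fun t htm => by
      have := hlip (ρ t) ⟨(hρmem t htm).1, le_trans (hρmem t htm).2 hβ⟩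
      exact LipschitzWith.of_dist_le_mul fun x y => by
        rw [dist_neg_neg]
        exact this.dist_le_mul x y)
    (fun x => by
      have : ContinuousOn (fun s => v (ρ s) x) (Icc α t₀) := by
        apply (hcont x).comp (by fun_prop) (fun s hsm => ?_)
        exact ⟨(hρmem s hsm).1, le_trans (hρmem s hsm).2 hβ⟩
      exact this.neg)
    (fun t htm => by
      simpa using hC0 (ρ t) ⟨(hρmem t htm).1, le_trans (hρmem t htm).2 hβ⟩) x₀
  set g : ℝ → E := fun t => g' (ρ t) with hg
  have hgt₀ : g t₀ = x₀ := by
    simp only [hg, hρ, add_sub_cancel_right]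
    exact hg'0
  have hgd : ∀ t ∈ Icc α t₀, HasDerivWithinAt g (v t (g t)) (Icc α t₀) t := by
    intro t htm
    have hρt : ρ t ∈ Icc α t₀ := hρmem t htm
    have h1 := hg' (ρ t) hρt
    have h2 : HasDerivWithinAt ρ (-1) (Icc α t₀) t := by
      exact ((hasDerivAt_id' t).const_sub (α + t₀)).hasDerivWithinAt
    have := h1.scomp t h2 (fun s hs => hρmem s hs)
    have hρρ : ρ (ρ t) = t := by simp [hρ]
    simpa [hg, hρρ, neg_neg, Function.comp_def] using this
  -- glue
  refine ⟨fun t => if t ≤ t₀ then g t else f t, by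
    show (if t₀ ≤ t₀ then g t₀ else f t₀) = x₀
    rw [if_pos le_rfl]; exact hgt₀, ?_⟩
  intro t htm
  have hfg : EqOn (fun t => if t ≤ t₀ then g t else f t) g (Icc α t₀) := by
    intro t' ht'; simp [ht'.2]
  have hff : EqOn (fun t => if t ≤ t₀ then g t else f t) f (Icc t₀ β) := by
    intro t' ht'
    rcases eq_or_lt_of_le ht'.1 with hq | hq
    · simp [← hq, hgt₀, hf0]
    · simp [not_le.mpr hq]
  have d1 : HasDerivWithinAt (fun t => if t ≤ t₀ then g t else f t)
      (v t ((fun t => if t ≤ t₀ then g t else f t) t)) (Icc α t₀) t := by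
    by_cases hc : t ≤ t₀
    · have htm' : t ∈ Icc α t₀ := ⟨htm.1, hc⟩
      exact ((hgd t htm').congr hfg (hfg htm')).congr_deriv (by simp [hfg htm'])
    · rw [hasDerivWithinAt_iff_hasFDerivWithinAt]
      exact HasFDerivWithinAt.of_notMem_closure (by
        rw [isClosed_Icc.closure_eq]; exact fun hm => hc hm.2)
  have d2 : HasDerivWithinAt (fun t => if t ≤ t₀ then g t else f t)
      (v t ((fun t => if t ≤ t₀ then g t else f t) t)) (Icc t₀ β) t := by
    by_cases hc : t₀ ≤ t
    · have htm' : t ∈ Icc t₀ β := ⟨hc, htm.2⟩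
      exact ((hf t htm').congr hff (hff htm')).congr_deriv (by simp [hff htm'])
    · rw [hasDerivWithinAt_iff_hasFDerivWithinAt]
      exact HasFDerivWithinAt.of_notMem_closure (by
        rw [isClosed_Icc.closure_eq]; exact fun hm => hc hm.1)
  have := d1.union d2
  rwa [Icc_union_Icc_eq_Icc hα hβ] at this

lemma linear_ode_exists (p : ℕ) (t1 t2 : ℝ) (t₀ : ℝ) (ht₀ : t₀ ∈ Icc t1 t2)
    (M : ℝ → Matrix (Fin p) (Fin p) ℝ) (c : ℝ → Fin p → ℝ)
    (hM : Continuous M) (hc : Continuous c) (x₀ : Fin p → ℝ) :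
    ∃ χ : ℝ → Fin p → ℝ, χ t₀ = x₀ ∧
      ∀ t ∈ Icc t1 t2, HasDerivAt χ (M t *ᵥ χ t + c t) t := by
  have ht : t1 ≤ t2 := le_trans ht₀.1 ht₀.2
  set α := t1 - 1 with hα
  set β := t2 + 1 with hβ
  have hab : α ≤ β := by simp only [α, β]; linarith
  have hent : ∀ j k, Continuous fun t => M t j k := fun j k =>
    (continuous_apply k).comp ((continuous_apply j).comp hM)
  have hcont1 : Continuous (fun t => ∑ j : Fin p, ∑ k : Fin p, |M t j k|) :=
    continuous_finset_sum _ fun j _ => continuous_finset_sum _ fun k _ => (hent j k).abs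
  obtain ⟨K0, hKb⟩ := (isCompact_Icc (a := α) (b := β)).exists_bound_of_continuousOn
    hcont1.continuousOn
  set K := max K0 0 with hKdef
  have hK0 : 0 ≤ K := le_max_right _ _
  have hK' : ∀ t ∈ Icc α β, ∀ j, ∑ k, |M t j k| ≤ K := by
    intro t htm j
    calc ∑ k, |M t j k| ≤ ∑ j', ∑ k, |M t j' k| := by
          apply Finset.single_le_sum (f := fun j' => ∑ k, |M t j' k|)
          · intro j' _; positivity
          · exact Finset.mem_univ j
    _ ≤ K0 := by
          have := hKb t htm
          rwa [Real.norm_eq_abs, abs_of_nonneg (by positivity)] at this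
    _ ≤ K := le_max_left _ _
  obtain ⟨C0, hC0b⟩ := (isCompact_Icc (a := α) (b := β)).exists_bound_of_continuousOn
    hc.continuousOn
  have hmv : ∀ t ∈ Icc α β, ∀ z : Fin p → ℝ, ‖M t *ᵥ z‖ ≤ K * ‖z‖ := by
    intro t htm z
    rw [pi_norm_le_iff_of_nonneg (by positivity)]
    intro j
    calc ‖(M t *ᵥ z) j‖ = |∑ k, M t j k * z k| := by rfl
    _ ≤ ∑ k, |M t j k * z k| := Finset.abs_sum_le_sum_abs _ _
    _ ≤ ∑ k, |M t j k| * ‖z‖ := by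
        apply Finset.sum_le_sum
        intro k _
        rw [abs_mul]
        exact mul_le_mul_of_nonneg_left (norm_le_pi_norm z k) (abs_nonneg _)
    _ = (∑ k, |M t j k|) * ‖z‖ := by rw [Finset.sum_mul]
    _ ≤ K * ‖z‖ := mul_le_mul_of_nonneg_right (hK' t htm j) (norm_nonneg _)
  obtain ⟨f, hf0, hf⟩ := chain_ode_two (fun t x => M t *ᵥ x + c t) α β t₀
    ⟨by simp only [hα]; linarith [ht₀.1], by simp only [hβ]; linarith [ht₀.2]⟩ K C0 hK0
    (fun t htm => LipschitzWith.of_dist_le_mul (fun x y => by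
      rw [dist_eq_norm, dist_eq_norm, Real.coe_toNNReal K hK0]
      have heq : (M t *ᵥ x + c t) - (M t *ᵥ y + c t) = M t *ᵥ (x - y) := by
        rw [Matrix.mulVec_sub]; abel
      rw [heq]
      exact hmv t htm _))
    (fun x => ((hM.matrix_mulVec continuous_const).add hc).continuousOn)
    (fun t htm => by simpa [Matrix.mulVec_zero] using hC0b t htm)
    x₀
  refine ⟨f, hf0, fun t htm => ?_⟩
  refine (hf t ⟨by simp only [hα]; linarith [htm.1], by simp only [hβ]; linarith [htm.2]⟩).hasDerivAt ?_
  apply Icc_mem_nhds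
  · simp only [hα]; linarith [htm.1]
  · simp only [hβ]; linarith [htm.2]

open Set Matrix in
theorem controllable_implies_C1_controls_vanishing_endpoints
    (p : ℕ) (hp : 0 < p) (t1 t2 : ℝ) (ht : t1 < t2)
    (A : ℝ → Matrix (Fin p) (Fin p) ℝ) (bv : ℝ → Fin p → ℝ)
    (hA : Continuous A) (hb : Continuous bv)
    (hctrl : ∀ x₀ x₁ : Fin p → ℝ, ∃ (u : ℝ → ℝ) (χ : ℝ → Fin p → ℝ),
      Measurable u ∧ (∃ C, ∀ t ∈ Icc t1 t2, |u t| ≤ C) ∧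
      χ t1 = x₀ ∧ χ t2 = x₁ ∧
      ∀ t ∈ Icc t1 t2, HasDerivAt χ (A t *ᵥ χ t + u t • bv t) t) :
    ∀ i : Fin p, ∃ (w : ℝ → ℝ) (χ : ℝ → Fin p → ℝ),
      ContDiff ℝ 1 w ∧
      w t1 = 0 ∧ deriv w t1 = 0 ∧ w t2 = 0 ∧ deriv w t2 = 0 ∧
      χ t1 = 0 ∧ χ t2 = Pi.single i 1 ∧
      ∀ t ∈ Icc t1 t2, HasDerivAt χ (A t *ᵥ χ t + w t • bv t) t := by
  classical
  have key0 : ∀ x : Fin p → ℝ, (∃ (w : ℝ → ℝ) (χ : ℝ → Fin p → ℝ),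
      ContDiff ℝ 1 w ∧
      w t1 = 0 ∧ deriv w t1 = 0 ∧ w t2 = 0 ∧ deriv w t2 = 0 ∧
      χ t1 = 0 ∧ χ t2 = x ∧
      ∀ t ∈ Icc t1 t2, HasDerivAt χ (A t *ᵥ χ t + w t • bv t) t) := by
    set P : (Fin p → ℝ) → Prop := fun x => ∃ (w : ℝ → ℝ) (χ : ℝ → Fin p → ℝ),
      ContDiff ℝ 1 w ∧
      w t1 = 0 ∧ deriv w t1 = 0 ∧ w t2 = 0 ∧ deriv w t2 = 0 ∧
      χ t1 = 0 ∧ χ t2 = x ∧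
      ∀ t ∈ Icc t1 t2, HasDerivAt χ (A t *ᵥ χ t + w t • bv t) t with hPdef
    show ∀ x, P x
    -- P is closed under the submodule operations
    have hzero : P 0 := by
      refine ⟨fun _ => 0, fun _ => 0, contDiff_const, rfl, by simp, rfl, by simp, rfl, rfl,
        fun t _ => ?_⟩
      have : (A t *ᵥ (0 : Fin p → ℝ) + (0:ℝ) • bv t) = 0 := by simp
      rw [this]
      exact hasDerivAt_const t 0
    have hadd : ∀ x y, P x → P y → P (x + y) := by
      rintro x y ⟨w1, χ1, hw1, hw1a, hw1b, hw1c, hw1d, hχ1a, hχ1b, hχ1d⟩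
        ⟨w2, χ2, hw2, hw2a, hw2b, hw2c, hw2d, hχ2a, hχ2b, hχ2d⟩
      refine ⟨fun t => w1 t + w2 t, fun t => χ1 t + χ2 t, hw1.add hw2, ?_, ?_, ?_, ?_, ?_, ?_, ?_⟩
      · simp [hw1a, hw2a]
      · rw [deriv_fun_add (hw1.differentiable one_ne_zero).differentiableAt
          (hw2.differentiable one_ne_zero).differentiableAt, hw1b, hw2b, add_zero]
      · simp [hw1c, hw2c]
      · rw [deriv_fun_add (hw1.differentiable one_ne_zero).differentiableAt
          (hw2.differentiable one_ne_zero).differentiableAt, hw1d, hw2d, add_zero]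
      · simp [hχ1a, hχ2a]
      · simp [hχ1b, hχ2b]
      · intro t htm
        have := (hχ1d t htm).add (hχ2d t htm)
        refine this.congr_deriv ?_
        rw [Matrix.mulVec_add, add_smul]
        abel
    have hsmul : ∀ (r : ℝ) (x), P x → P (r • x) := by
      rintro r x ⟨w1, χ1, hw1, hw1a, hw1b, hw1c, hw1d, hχ1a, hχ1b, hχ1d⟩
      refine ⟨fun t => r * w1 t, fun t => r • χ1 t, hw1.const_smul r, ?_, ?_, ?_, ?_, ?_, ?_, ?_⟩
      · simp [hw1a]
      · rw [deriv_const_mul r (hw1.differentiable one_ne_zero).differentiableAt, hw1b, mul_zero]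
      · simp [hw1c]
      · rw [deriv_const_mul r (hw1.differentiable one_ne_zero).differentiableAt, hw1d, mul_zero]
      · simp [hχ1a]
      · simp [hχ1b]
      · intro t htm
        have := (hχ1d t htm).const_smul r
        refine this.congr_deriv ?_
        simp only [Matrix.mulVec_smul, smul_add, smul_smul]
    set S : Submodule ℝ (Fin p → ℝ) :=
      { carrier := setOf P
        zero_mem' := hzero
        add_mem' := fun hx hy => hadd _ _ hx hy
        smul_mem' := fun r x hx => hsmul r x hx } with hSdef
    by_contra hnot
    push_neg at hnot
    obtain ⟨x₀, hx₀⟩ := hnot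
    have hSlt : S < ⊤ := lt_top_iff_ne_top.mpr fun hS =>
      hx₀ (show x₀ ∈ S from hS.symm ▸ Submodule.mem_top)
    obtain ⟨φ, hφ0, hφker⟩ := S.exists_le_ker_of_lt_top hSlt
    set η : Fin p → ℝ := fun j => φ (Pi.single j 1) with hηdef
    have hφx : ∀ x, φ x = ∑ j, x j * η j := by
      intro x
      have hx : x = ∑ j, x j • (Pi.single j 1 : Fin p → ℝ) := by
        simp_rw [← Pi.single_smul, smul_eq_mul, mul_one]
        rw [Finset.univ_sum_single]
      calc φ x = φ (∑ j, x j • (Pi.single j 1 : Fin p → ℝ)) := by rw [← hx]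
      _ = ∑ j, x j * η j := by rw [map_sum]; simp [hηdef, smul_eq_mul]
    have hη0 : η ≠ 0 := by
      intro hη
      apply hφ0
      apply LinearMap.ext
      intro x
      rw [hφx x, hη]
      simp
    have hφS : ∀ x, P x → η ⬝ᵥ x = 0 := by
      intro x hx
      have : φ x = 0 := hφker hx
      rw [hφx] at this
      rw [dotProduct]
      rw [← this]
      exact Finset.sum_congr rfl fun j _ => mul_comm _ _
    -- adjoint solution
    obtain ⟨ψ, hψ2, hψd⟩ := linear_ode_exists p t1 t2 t2 ⟨ht.le, le_rfl⟩
      (fun t => -((A t)ᵀ)) (fun _ => 0) (hA.matrix_transpose.neg) continuous_const η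
    have hψd' : ∀ t ∈ Icc t1 t2, HasDerivAt ψ (-((A t)ᵀ *ᵥ ψ t)) t := fun t htm => by
      simpa [Matrix.neg_mulVec] using hψd t htm
    set g : ℝ → ℝ := fun t => ψ t ⬝ᵥ bv t with hgdef
    have hψcont : ContinuousOn ψ (Icc t1 t2) := fun t htm =>
      ((hψd t htm).continuousAt).continuousWithinAt
    have hgcont : ContinuousOn g (Icc t1 t2) := by
      apply continuousOn_finset_sum
      intro j _
      exact ((continuous_apply j).comp_continuousOn hψcont).mul
        ((continuous_apply j).comp hb).continuousOn
    -- the key FTC identity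
    have key : ∀ (u : ℝ → ℝ) (χ : ℝ → Fin p → ℝ),
        IntervalIntegrable (fun t => u t * g t) volume t1 t2 →
        (∀ t ∈ Icc t1 t2, HasDerivAt χ (A t *ᵥ χ t + u t • bv t) t) →
        χ t1 = 0 →
        η ⬝ᵥ χ t2 = ∫ t in t1..t2, u t * g t := by
      intro u χ hint hχd hχ0
      have hptws : ∀ t ∈ uIcc t1 t2, HasDerivAt (fun t => ψ t ⬝ᵥ χ t) (u t * g t) t := by
        intro t htm
        rw [uIcc_of_le ht.le] at htm
        have h1' := hasDerivAt_pi.1 (hψd' t htm)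
        have h2' := hasDerivAt_pi.1 (hχd t htm)
        have hsum : HasDerivAt (fun t => ∑ j, ψ t j * χ t j)
            (∑ j, ((-((A t)ᵀ *ᵥ ψ t)) j * χ t j
              + ψ t j * (A t *ᵥ χ t + u t • bv t) j)) t :=
          HasDerivAt.fun_sum fun j _ => (h1' j).mul (h2' j)
        have halg : (∑ j, ((-((A t)ᵀ *ᵥ ψ t)) j * χ t j
              + ψ t j * (A t *ᵥ χ t + u t • bv t) j)) = u t * g t := by
          have cancel : ∑ j, (∑ k, A t k j * ψ t k) * χ t j
              = ∑ j, ψ t j * ∑ k, A t j k * χ t k := by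
            simp only [Finset.sum_mul]
            rw [Finset.sum_comm]
            simp only [Finset.mul_sum]
            exact Finset.sum_congr rfl fun j _ => Finset.sum_congr rfl fun k _ => by ring
          have humul : ∑ j, ψ t j * (u t * bv t j) = u t * ∑ j, ψ t j * bv t j := by
            rw [Finset.mul_sum]
            exact Finset.sum_congr rfl fun j _ => by ring
          simp only [Pi.neg_apply, Pi.add_apply, Pi.smul_apply, smul_eq_mul,
            Matrix.mulVec, dotProduct, Matrix.transpose_apply, neg_mul, mul_add,
            Finset.sum_add_distrib, hgdef]
          rw [humul, Finset.sum_neg_distrib, cancel]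
          ring
        rw [halg] at hsum
        exact hsum
      have := intervalIntegral.integral_eq_sub_of_hasDerivAt hptws hint
      rw [this, hψ2, hχ0, dotProduct_zero, sub_zero]
    -- bound for g on Icc
    obtain ⟨Cg0, hCg0⟩ := (isCompact_Icc (a := t1) (b := t2)).exists_bound_of_continuousOn hgcont
    set Cg := max Cg0 0 with hCgdef
    have hCg : ∀ t ∈ Icc t1 t2, |g t| ≤ Cg := fun t htm =>
      le_trans (le_of_eq (Real.norm_eq_abs _).symm) (le_trans (hCg0 t htm) (le_max_left _ _))
    have hCgnn : 0 ≤ Cg := le_max_right _ _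
    -- Step 1 : there is an interior point where g is nonzero
    have hex : ∃ t₀ ∈ Ioo t1 t2, g t₀ ≠ 0 := by
      by_contra hg0
      push_neg at hg0
      obtain ⟨j, hj⟩ := Function.ne_iff.1 hη0
      rw [Pi.zero_apply] at hj
      set x₁ : Fin p → ℝ := (η j)⁻¹ • (Pi.single j 1 : Fin p → ℝ) with hx₁
      obtain ⟨u, χ, hum, ⟨C, hC⟩, hχ1, hχ2, hχd⟩ := hctrl 0 x₁
      have hCnn : 0 ≤ C := le_trans (abs_nonneg _) (hC t1 ⟨le_rfl, ht.le⟩)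
      have hint : IntervalIntegrable (fun t => u t * g t) volume t1 t2 := by
        rw [intervalIntegrable_iff_integrableOn_Ioc_of_le ht.le]
        refine ⟨((hum.aemeasurable.restrict).mul
          ((hgcont.mono Ioc_subset_Icc_self).aemeasurable measurableSet_Ioc)).aestronglyMeasurable,
          HasFiniteIntegral.restrict_of_bounded (C := C * Cg) measure_Ioc_lt_top ?_⟩
        rw [ae_restrict_iff' measurableSet_Ioc]
        filter_upwards with t htm
        rw [Real.norm_eq_abs, abs_mul]
        exact mul_le_mul (hC t (Ioc_subset_Icc_self htm)) (hCg t (Ioc_subset_Icc_self htm))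
          (abs_nonneg _) hCnn
      have hzero_int : (∫ t in t1..t2, u t * g t) = 0 := by
        rw [intervalIntegral.integral_of_le ht.le]
        apply integral_eq_zero_of_ae
        rw [Filter.EventuallyEq, ae_restrict_iff' measurableSet_Ioc]
        have hne : ∀ᵐ (t : ℝ), t ≠ t2 := by
          rw [ae_iff]
          have : {t : ℝ | ¬t ≠ t2} = {t2} := by ext t; simp
          rw [this]
          exact Real.volume_singleton
        filter_upwards [hne] with t hnet htm
        have htIoo : t ∈ Ioo t1 t2 := ⟨htm.1, lt_of_le_of_ne htm.2 hnet⟩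
        simp [hg0 t htIoo]
      have hkey := key u χ hint hχd hχ1
      rw [hχ2, hzero_int, hx₁, dotProduct_smul, dotProduct_single, mul_one,
        smul_eq_mul, inv_mul_cancel₀ hj] at hkey
      exact one_ne_zero hkey
    obtain ⟨t₀, ht₀, hgt₀⟩ := hex
    -- Step 2 : bump control supported near t₀
    have hgc : ContinuousAt g t₀ :=
      (hgcont t₀ (Ioo_subset_Icc_self ht₀)).continuousAt (Icc_mem_nhds ht₀.1 ht₀.2)
    have habs : (0:ℝ) < |g t₀| / 2 := half_pos (abs_pos.mpr hgt₀)
    obtain ⟨δ, hδ0, hδ⟩ := Metric.continuousAt_iff.1 hgc (|g t₀| / 2) habs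
    obtain ⟨r1, hr10, hr1⟩ := Metric.isOpen_iff.1 isOpen_Ioo t₀ ht₀
    set r := min δ r1 / 2 with hrdef
    have hr0 : 0 < r := by positivity
    have hrsub : closedBall t₀ r ⊆ ball t₀ (min δ r1) :=
      closedBall_subset_ball (by rw [hrdef]; exact half_lt_self (lt_min hδ0 hr10))
    have hball_Ioo : closedBall t₀ r ⊆ Ioo t1 t2 :=
      subset_trans hrsub (subset_trans (ball_subset_ball (min_le_right _ _)) hr1)
    have hgsame : ∀ s ∈ closedBall t₀ r, |g s - g t₀| < |g t₀| / 2 := by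
      intro s hs
      have h1 : dist s t₀ < δ :=
        lt_of_lt_of_le (mem_ball.1 (hrsub hs)) (min_le_left _ _)
      have := hδ h1
      rwa [Real.dist_eq] at this
    set f : ContDiffBump t₀ := ⟨r / 2, r, by positivity, by simpa using half_lt_self hr0⟩
      with hfdef
    set w : ℝ → ℝ := fun t => f t with hwdef
    have hwcont : ContDiff ℝ 1 w := f.contDiff
    have hwz : ∀ s, s ∉ ball t₀ r → w s = 0 := by
      intro s hs
      apply f.zero_of_le_dist
      rw [mem_ball] at hs
      push_neg at hs
      exact hs
    have ht1nb : t1 ∉ closedBall t₀ r := fun hmem => lt_irrefl t1 (hball_Ioo hmem).1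
    have ht2nb : t2 ∉ closedBall t₀ r := fun hmem => lt_irrefl t2 (hball_Ioo hmem).2
    have hwt1ev : w =ᶠ[nhds t1] (fun _ => 0) := by
      filter_upwards [Metric.isClosed_closedBall.isOpen_compl.mem_nhds ht1nb] with s hsmem
      exact hwz s fun hbm => hsmem (ball_subset_closedBall hbm)
    have hwt2ev : w =ᶠ[nhds t2] (fun _ => 0) := by
      filter_upwards [Metric.isClosed_closedBall.isOpen_compl.mem_nhds ht2nb] with s hsmem
      exact hwz s fun hbm => hsmem (ball_subset_closedBall hbm)
    have hwA : w t1 = 0 := hwt1ev.eq_of_nhds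
    have hwB : deriv w t1 = 0 := by rw [hwt1ev.deriv_eq]; simp
    have hwC : w t2 = 0 := hwt2ev.eq_of_nhds
    have hwD : deriv w t2 = 0 := by rw [hwt2ev.deriv_eq]; simp
    obtain ⟨χ, hχ1, hχd⟩ := linear_ode_exists p t1 t2 t1 ⟨le_rfl, ht.le⟩ A
      (fun t => w t • bv t) hA (hwcont.continuous.smul hb) 0
    have hPmem : P (χ t2) := ⟨w, χ, hwcont, hwA, hwB, hwC, hwD, hχ1, rfl, hχd⟩
    have hdot0 : η ⬝ᵥ χ t2 = 0 := hφS _ hPmem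
    have hint : IntervalIntegrable (fun t => w t * g t) volume t1 t2 :=
      ContinuousOn.intervalIntegrable (by
        rw [uIcc_of_le ht.le]
        exact (hwcont.continuous.continuousOn).mul hgcont)
    have hkey := key w χ hint hχd hχ1
    rw [hdot0] at hkey
    -- split the integral
    set cc := t₀ - r with hccdef
    set dd := t₀ + r with hdddef
    have hcmem : t₀ - r ∈ closedBall t₀ r := by
      rw [mem_closedBall, Real.dist_eq]
      rw [abs_of_nonpos (by linarith)]
      linarith
    have hdmem : t₀ + r ∈ closedBall t₀ r := by
      rw [mem_closedBall, Real.dist_eq]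
      rw [abs_of_nonneg (by linarith)]
      linarith
    have ht1c : t1 < cc := (hball_Ioo hcmem).1
    have hdt2 : dd < t2 := (hball_Ioo hdmem).2
    have hcd : cc < dd := by rw [hccdef, hdddef]; linarith
    have i1 : IntervalIntegrable (fun t => w t * g t) volume t1 cc :=
      hint.mono_set (by
        rw [uIcc_of_le (by linarith : t1 ≤ cc), uIcc_of_le ht.le]
        exact Icc_subset_Icc le_rfl (by linarith))
    have i2 : IntervalIntegrable (fun t => w t * g t) volume cc dd :=
      hint.mono_set (by
        rw [uIcc_of_le (by linarith : cc ≤ dd), uIcc_of_le ht.le]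
        exact Icc_subset_Icc (by linarith) (by linarith))
    have i3 : IntervalIntegrable (fun t => w t * g t) volume dd t2 :=
      hint.mono_set (by
        rw [uIcc_of_le (by linarith : dd ≤ t2), uIcc_of_le ht.le]
        exact Icc_subset_Icc (by linarith) le_rfl)
    have hadd2 := intervalIntegral.integral_add_adjacent_intervals i2 i3
    have hadd1 := intervalIntegral.integral_add_adjacent_intervals i1 (i2.trans i3)
    have hzero1 : (∫ t in t1..cc, w t * g t) = 0 := by
      have heq : EqOn (fun t => w t * g t) (fun _ => 0) (uIcc t1 cc) := by
        intro s hs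
        rw [uIcc_of_le (by linarith : t1 ≤ cc)] at hs
        have : s ∉ ball t₀ r := by
          rw [mem_ball, Real.dist_eq, not_lt]
          rw [abs_of_nonpos (by rw [hccdef] at hs; linarith [hs.2])]
          rw [hccdef] at hs; linarith [hs.2]
        simp [hwz s this]
      rw [intervalIntegral.integral_congr heq, intervalIntegral.integral_zero]
    have hzero3 : (∫ t in dd..t2, w t * g t) = 0 := by
      have heq : EqOn (fun t => w t * g t) (fun _ => 0) (uIcc dd t2) := by
        intro s hs
        rw [uIcc_of_le (by linarith : dd ≤ t2)] at hs
        have : s ∉ ball t₀ r := by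
          rw [mem_ball, Real.dist_eq, not_lt]
          rw [abs_of_nonneg (by rw [hdddef] at hs; linarith [hs.1])]
          rw [hdddef] at hs; linarith [hs.1]
        simp [hwz s this]
      rw [intervalIntegral.integral_congr heq, intervalIntegral.integral_zero]
    have hIoo_ball : Ioo cc dd = ball t₀ r := by
      rw [Real.ball_eq_Ioo, hccdef, hdddef]
    have hmid : (∫ t in cc..dd, w t * g t) ≠ 0 := by
      rcases lt_or_gt_of_ne hgt₀ with hneg | hpos
      · apply ne_of_lt
        have hposint : 0 < ∫ t in cc..dd, (fun t => w t * -g t) t := by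
          apply intervalIntegral.intervalIntegral_pos_of_pos_on
          · have : (fun t => w t * -g t) = fun t => -(w t * g t) := by funext t; ring
            rw [this]
            exact i2.neg
          · intro s hs
            rw [hIoo_ball] at hs
            have h1 : 0 < w s := f.pos_of_mem_ball hs
            have h2 : g s < 0 := by
              have := hgsame s (ball_subset_closedBall hs)
              rw [abs_lt, abs_of_neg hneg] at this
              linarith [this.2]
            exact mul_pos h1 (by linarith)
          · exact hcd
        have : (∫ t in cc..dd, (fun t => w t * -g t) t) = -∫ t in cc..dd, w t * g t := by
          rw [← intervalIntegral.integral_neg]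
          apply intervalIntegral.integral_congr
          intro s _; ring
        rw [this] at hposint
        linarith
      · apply ne_of_gt
        apply intervalIntegral.intervalIntegral_pos_of_pos_on i2 _ hcd
        intro s hs
        rw [hIoo_ball] at hs
        have h1 : 0 < w s := f.pos_of_mem_ball hs
        have h2 : 0 < g s := by
          have := hgsame s (ball_subset_closedBall hs)
          rw [abs_lt, abs_of_pos hpos] at this
          linarith [this.1]
        exact mul_pos h1 h2
    rw [← hadd1, ← hadd2, hzero1, hzero3, zero_add, add_zero] at hkey
    exact hmid hkey.symm
  intro i
  exact key0 (Pi.single i 1)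
end

section
/- Suppose β : ℝⁿ × ℝ → ℝ is continuous and for each x ∈ ℝⁿ the map u ↦ β(x, u) is surjective onto ℝ (condition (A)). Let c : I → ℝⁿ and γ : I → ℝ be measurable with c(·), γ(·) essentially bounded on a compact interval I, with c(t) a continuous curve. Then there exists a measurable essentially bounded control u : I → ℝ such that β(c(t), u(t)) = γ(t) for almost every t ∈ I. -/
open Set MeasureTheory ENNReal

lemma filippov_aux_measurable {E : Type*} [TopologicalSpace E]
    (β : E → ℝ → ℝ) (hβc : Continuous fun p : E × ℝ => β p.1 p.2)
    (c' : ℝ → E) (hc' : Continuous c')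
    (γ : ℝ → ℝ) (hγm : Measurable γ) (a b : ℝ) :
    MeasurableSet {t : ℝ | ∃ v ∈ Icc a b, β (c' t) v = γ t} := by
  by_cases hab : a ≤ b
  · -- dense sequence in Icc a b
    have : Nonempty (Icc a b) := ⟨⟨a, le_refl a, hab⟩⟩
    obtain ⟨D, hD⟩ := TopologicalSpace.exists_dense_seq (Icc a b)
    set g : ℝ → ℝ≥0∞ := fun t => ⨅ k, ENNReal.ofReal |β (c' t) (D k) - γ t| with hg
    have hmeas_each : ∀ k, Measurable fun t => ENNReal.ofReal |β (c' t) (D k) - γ t| := by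
      intro k
      have h1 : Continuous fun t => β (c' t) (D k) :=
        hβc.comp (hc'.prodMk continuous_const)
      exact ENNReal.measurable_ofReal.comp ((h1.measurable.sub hγm).abs)
    have hgm : Measurable g := Measurable.iInf hmeas_each
    have hset : {t : ℝ | ∃ v ∈ Icc a b, β (c' t) v = γ t} = g ⁻¹' {0} := by
      ext t
      simp only [mem_setOf_eq, mem_preimage, mem_singleton_iff]
      constructor
      · rintro ⟨v, hv, hveq⟩
        refine le_antisymm ?_ zero_le
        refine ENNReal.le_of_forall_pos_le_add ?_
        intro ε hε _
        rw [zero_add]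
        -- find k with |β (c' t) (D k) - γ t| < ε
        have hcont : Continuous fun w : ℝ => |β (c' t) w - γ t| :=
          ((hβc.comp (continuous_const.prodMk continuous_id)).sub continuous_const).abs
        have h0 : |β (c' t) v - γ t| = 0 := by rw [hveq]; simp
        have : ∀ᶠ w in nhds v, |β (c' t) w - γ t| < ε := by
          have := hcont.continuousAt (x := v)
          have hlt : |β (c' t) v - γ t| < ε := by rw [h0]; exact_mod_cast hε
          exact this.eventually_lt continuousAt_const hlt
        obtain ⟨δ, hδ, hball⟩ := Metric.eventually_nhds_iff.mp this
        obtain ⟨k, hk⟩ := hD.exists_dist_lt (⟨v, hv⟩ : Icc a b) hδ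
        have hdk : dist ((D k : ℝ)) v < δ := by
          rw [dist_comm]; exact hk
        have := hball hdk
        calc g t ≤ ENNReal.ofReal |β (c' t) (D k) - γ t| := iInf_le _ k
          _ ≤ ENNReal.ofReal ε := ENNReal.ofReal_le_ofReal this.le
          _ = (ε : ℝ≥0∞) := ENNReal.ofReal_coe_nnreal
      · intro hzero
        -- min of continuous function on compact Icc
        have hcont : ContinuousOn (fun w : ℝ => |β (c' t) w - γ t|) (Icc a b) :=
          (((hβc.comp (continuous_const.prodMk continuous_id)).sub continuous_const).abs).continuousOn
        obtain ⟨v, hv, hvmin⟩ :=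
          isCompact_Icc.exists_isMinOn (Set.nonempty_Icc.mpr hab) hcont
        refine ⟨v, hv, ?_⟩
        have hle : ∀ k, |β (c' t) v - γ t| ≤ |β (c' t) (D k) - γ t| := fun k =>
          hvmin (D k).2
        have : ENNReal.ofReal |β (c' t) v - γ t| ≤ g t :=
          le_iInf fun k => ENNReal.ofReal_le_ofReal (hle k)
        rw [hzero, nonpos_iff_eq_zero, ENNReal.ofReal_eq_zero] at this
        have habs : |β (c' t) v - γ t| = 0 := le_antisymm this (abs_nonneg _)
        rwa [abs_eq_zero, sub_eq_zero] at habs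
    rw [hset]
    exact hgm (measurableSet_singleton 0)
  · convert MeasurableSet.empty
    ext t
    simp only [mem_setOf_eq, mem_empty_iff_false, iff_false, not_exists]
    rintro v ⟨h1, h2⟩
    exact absurd (h1.1.trans h1.2) hab

open Set MeasureTheory in
theorem filippov_selection
    (n : ℕ) (hn : 0 < n) (t₀ T : ℝ) (ht : t₀ < T)
    (β : EuclideanSpace ℝ (Fin n) → ℝ → ℝ)
    (hβc : Continuous fun p : EuclideanSpace ℝ (Fin n) × ℝ => β p.1 p.2)
    (hβsurj : ∀ x, Function.Surjective (β x))
    (c : ℝ → EuclideanSpace ℝ (Fin n)) (hcc : ContinuousOn c (Icc t₀ T))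
    (hcb : ∃ C, ∀ t ∈ Icc t₀ T, ‖c t‖ ≤ C)
    (γ : ℝ → ℝ) (hγm : Measurable γ) (hγb : ∃ C, ∀ t ∈ Icc t₀ T, |γ t| ≤ C) :
    ∃ u : ℝ → ℝ, Measurable u ∧ (∃ C, ∀ t ∈ Icc t₀ T, |u t| ≤ C) ∧
      ∀ᵐ t ∂(volume.restrict (Icc t₀ T)), β (c t) (u t) = γ t := by
  obtain ⟨C, hC⟩ := hγb
  -- replace c by a globally continuous extension c'
  set π : ℝ → ℝ := fun t => max t₀ (min t T) with hπdef
  have hπc : Continuous π := continuous_const.max (continuous_id.min continuous_const)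
  have hπmem : ∀ t, π t ∈ Icc t₀ T :=
    fun t => ⟨le_max_left _ _, max_le ht.le (min_le_right _ _)⟩
  set c' : ℝ → EuclideanSpace ℝ (Fin n) := fun t => c (π t) with hc'def
  have hc' : Continuous c' := hcc.comp_continuous hπc hπmem
  have hc'eq : ∀ t ∈ Icc t₀ T, c' t = c t := by
    rintro t ⟨h1, h2⟩
    simp only [hc'def, hπdef, min_eq_left h2, max_eq_right h1]
  -- compact image
  have hK : IsCompact (c' '' Icc t₀ T) := (isCompact_Icc.image hc')
  -- choices of controls hitting ±(C+1)
  set a : EuclideanSpace ℝ (Fin n) → ℝ := fun x => (hβsurj x (-(C + 1))).choose with hadef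
  set b : EuclideanSpace ℝ (Fin n) → ℝ := fun x => (hβsurj x (C + 1)).choose with hbdef
  have ha : ∀ x, β x (a x) = -(C + 1) := fun x => (hβsurj x (-(C + 1))).choose_spec
  have hb : ∀ x, β x (b x) = C + 1 := fun x => (hβsurj x (C + 1)).choose_spec
  set U : EuclideanSpace ℝ (Fin n) → Set (EuclideanSpace ℝ (Fin n)) :=
    fun x => {y | β y (a x) < -C ∧ C < β y (b x)} with hUdef
  have hUnhds : ∀ x ∈ c' '' Icc t₀ T, U x ∈ nhds x := by
    intro x _
    have h1 : Continuous fun y => β y (a x) := hβc.comp (continuous_id.prodMk continuous_const)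
    have h2 : Continuous fun y => β y (b x) := hβc.comp (continuous_id.prodMk continuous_const)
    have hopen : IsOpen (U x) := (isOpen_lt h1 continuous_const).inter (isOpen_lt continuous_const h2)
    refine hopen.mem_nhds ⟨?_, ?_⟩
    · rw [ha x]; linarith
    · rw [hb x]; linarith
  obtain ⟨ts, hts, hcov⟩ := hK.elim_nhds_subcover U hUnhds
  set M : ℝ := 1 + ∑ x ∈ ts, (|a x| + |b x|) with hMdef
  have hsum_nonneg : ∀ x ∈ ts, 0 ≤ |a x| + |b x| :=
    fun x _ => add_nonneg (abs_nonneg _) (abs_nonneg _)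
  have hMb : ∀ x ∈ ts, |a x| ≤ M ∧ |b x| ≤ M := by
    intro x hx
    have hsle : |a x| + |b x| ≤ ∑ y ∈ ts, (|a y| + |b y|) :=
      Finset.single_le_sum hsum_nonneg hx
    constructor <;> [skip; skip] <;>
      · rw [hMdef]
        nlinarith [abs_nonneg (a x), abs_nonneg (b x)]
  -- key: for t in Icc, controls in [-M, M] straddling γ t
  have hkey : ∀ t ∈ Icc t₀ T, ∃ p ∈ Icc (-M) M, ∃ q ∈ Icc (-M) M,
      β (c' t) p < -C ∧ C < β (c' t) q := by
    intro t htmem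
    have : c' t ∈ ⋃ x ∈ ts, U x := hcov (mem_image_of_mem c' htmem)
    simp only [mem_iUnion] at this
    obtain ⟨x, hx, hU⟩ := this
    exact ⟨a x, abs_le.mp (hMb x hx).1, b x, abs_le.mp (hMb x hx).2, hU.1, hU.2⟩
  -- the selection set
  set S : ℝ → Set ℝ := fun t => {v | v ∈ Icc (-M) M ∧ β (c' t) v = γ t} with hSdef
  have hScl : ∀ t, IsClosed (S t) := by
    intro t
    have : S t = Icc (-M) M ∩ (fun v => β (c' t) v) ⁻¹' {γ t} := rfl
    rw [this]
    exact isClosed_Icc.inter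
      (isClosed_singleton.preimage (hβc.comp (continuous_const.prodMk continuous_id)))
  have hScpt : ∀ t, IsCompact (S t) :=
    fun t => isCompact_Icc.of_isClosed_subset (hScl t) (fun v hv => hv.1)
  have hne : ∀ t ∈ Icc t₀ T, (S t).Nonempty := by
    intro t htmem
    obtain ⟨p, hp, q, hq, hpl, hql⟩ := hkey t htmem
    have hcont : ContinuousOn (fun v => β (c' t) v) (uIcc p q) :=
      ((hβc.comp (continuous_const.prodMk continuous_id))).continuousOn
    have hmem : γ t ∈ uIcc (β (c' t) p) (β (c' t) q) := by
      obtain ⟨hγ1, hγ2⟩ := abs_le.mp (hC t htmem)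
      rcases le_total (β (c' t) p) (β (c' t) q) with h | h
      · rw [uIcc_of_le h]; exact ⟨by linarith, by linarith⟩
      · linarith
    obtain ⟨v, hv, hveq⟩ := intermediate_value_uIcc hcont hmem
    exact ⟨v, uIcc_subset_Icc hp hq hv, hveq⟩
  set f : ℝ → ℝ := fun t => sInf (S t) with hfdef
  have hfmem : ∀ t ∈ Icc t₀ T, f t ∈ S t :=
    fun t htmem => (hScpt t).sInf_mem (hne t htmem)
  set u : ℝ → ℝ := fun t => if t ∈ Icc t₀ T then f t else 0 with hudef
  refine ⟨u, ?_, ⟨M, ?_⟩, ?_⟩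
  · -- measurability
    apply measurable_of_Iic
    intro r
    have heq : u ⁻¹' Iic r =
        (Icc t₀ T ∩ {t | ∃ v ∈ Icc (-M) (min M r), β (c' t) v = γ t}) ∪
        ((Icc t₀ T)ᶜ ∩ {t : ℝ | (0:ℝ) ≤ r}) := by
      ext t
      by_cases htm : t ∈ Icc t₀ T
      · simp only [mem_preimage, mem_Iic, hudef, if_pos htm, mem_union, mem_inter_iff,
          mem_compl_iff, htm, not_true_eq_false, false_and, or_false, true_and, mem_setOf_eq]
        constructor
        · intro hfr
          obtain ⟨⟨hf1, hf2⟩, hfeq⟩ := hfmem t htm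
          exact ⟨f t, ⟨hf1, le_min hf2 hfr⟩, hfeq⟩
        · rintro ⟨v, ⟨hv1, hv2⟩, hveq⟩
          have hvS : v ∈ S t := ⟨⟨hv1, hv2.trans (min_le_left _ _)⟩, hveq⟩
          exact le_trans (csInf_le (hScpt t).bddBelow hvS) (hv2.trans (min_le_right _ _))
      · simp only [mem_preimage, mem_Iic, hudef, if_neg htm, mem_union, mem_inter_iff,
          mem_compl_iff, htm, not_false_eq_true, true_and, false_and, false_or, mem_setOf_eq,
          if_false]
    rw [heq]
    refine (measurableSet_Icc.inter
        (filippov_aux_measurable β hβc c' hc' γ hγm (-M) (min M r))).union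
      (measurableSet_Icc.compl.inter ?_)
    by_cases h0r : (0:ℝ) ≤ r
    · simp only [h0r, setOf_true]; exact MeasurableSet.univ
    · simp only [h0r, setOf_false]; exact MeasurableSet.empty
  · -- boundedness
    intro t htmem
    have := (hfmem t htmem).1
    rw [hudef]
    simp only [if_pos htmem]
    exact abs_le.mpr this
  · -- a.e. equality
    rw [ae_restrict_iff' measurableSet_Icc]
    refine ae_of_all _ (fun t htmem => ?_)
    have h1 := (hfmem t htmem).2
    rw [hudef]
    simp only [if_pos htmem]
    rw [← hc'eq t htmem]
    exact h1
end
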